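/- Let n ∈ ℕ and ε ∈ E_n. (i) For every s ∈ (0,∞), the image of the point (1,s) under M_ε is a point (x,y) with x ≠ 0 and y/x = 2^n / (1/s + 2(ε)₂); hence M_ε maps the line through the origin of slope s onto the line through the origin of slope 2^n/(1/s + 2(ε)₂). (ii) M_ε maps (0,1) to (4^{−n}·2·(ε)₂, 2^{−n}); in particular, if (ε)₂ ≠ 0 the image of the vertical axis is the line through the origin of slope 2^{n−1}/(ε)₂, and if (ε)₂ = 0 the image of the vertical axis is the vertical axis. (iii) M_ε maps (1,0) to (4^{−n}, 0), so the image of the horizontal axis is the horizontal axis. -/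

import Mathlib

/-- The shearlet dilation matrix `M_k`: first row `(1/4, k/2)`, second row `(0, 1/2)`. -/
noncomputable def Mmat (k : ℤ) : Matrix (Fin 2) (Fin 2) ℝ :=
  !![1/4, (k : ℝ)/2; 0, 1/2]

/-- `M_ε = M_{ε_n} ⋯ M_{ε_1}` for `ε = (ε_1, …, ε_n)` (0-indexed: `ε_i = ε (i-1)`). -/
noncomputable def Mprod {n : ℕ} (ε : Fin n → ℤ) : Matrix (Fin 2) (Fin 2) ℝ :=
  ((List.ofFn fun i => Mmat (ε i)).reverse).prod

/-- `(ε)₂ = Σ_{j=0}^{n-1} ε_{j+1} 2^j`. -/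
def binVal {n : ℕ} (ε : Fin n → ℤ) : ℤ := ∑ j : Fin n, ε j * 2 ^ (j : ℕ)

/-- The line through the origin of slope `s`. -/
def lineOfSlope (s : ℝ) : Set (Fin 2 → ℝ) := {p | p 1 = s * p 0}

/-- (i) For `s ∈ (0,∞)` the image of `(1,s)` under `M_ε` is a point `(x,y)` with `x ≠ 0`
and `y/x = 2^n/(1/s + 2(ε)₂)`, and `M_ε` maps the line of slope `s` onto the line of
slope `2^n/(1/s + 2(ε)₂)`. (ii) `M_ε` maps `(0,1)` to `(4^{-n}·2·(ε)₂, 2^{-n})`;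
if `(ε)₂ ≠ 0` the image of the vertical axis is the line of slope `2^{n-1}/(ε)₂`, and
if `(ε)₂ = 0` the image of the vertical axis is the vertical axis. (iii) `M_ε` maps
`(1,0)` to `(4^{-n},0)` and the image of the horizontal axis is the horizontal axis. -/


lemma mulVec_fin2 (a b c d : ℝ) (p : Fin 2 → ℝ) :
    (!![a,b;c,d]).mulVec p = ![a * p 0 + b * p 1, c * p 0 + d * p 1] := by
  funext i
  fin_cases i <;> simp [Matrix.mulVec, dotProduct, Fin.sum_univ_two, Matrix.vecHead, Matrix.vecTail]

lemma Mprod_eq (n : ℕ) (ε : Fin n → ℤ) :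
    Mprod ε = !![(4:ℝ)^(-(n:ℤ)), 2 * (4:ℝ)^(-(n:ℤ)) * (binVal ε : ℝ);
                 0, (2:ℝ)^(-(n:ℤ))] := by
  induction n with
  | zero =>
    simp [Mprod, binVal, Matrix.one_fin_two]
  | succ n ih =>
    have hsplit : Mprod ε = Mmat (ε (Fin.last n)) * Mprod (fun i => ε i.castSucc) := by
      rw [Mprod, Mprod, List.ofFn_succ', List.concat_eq_append, List.reverse_append]
      simp
    have hb : (binVal ε : ℝ) = (binVal fun i => ε i.castSucc) + (ε (Fin.last n)) * 2^n := by
      rw [binVal, binVal, Fin.sum_univ_castSucc]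
      push_cast [Fin.coe_castSucc]
      ring
    rw [hsplit, ih, Mmat, Matrix.mul_fin_two]
    have e4 : ∀ m:ℕ, (4:ℝ)^(-(m:ℤ)) = (((2:ℝ)^m)^2)⁻¹ := by
      intro m
      rw [zpow_neg, zpow_natCast, ← pow_mul, show (4:ℝ) = 2^2 by norm_num, ← pow_mul,
        Nat.mul_comm]
    have e2 : ∀ m:ℕ, (2:ℝ)^(-(m:ℤ)) = ((2:ℝ)^m)⁻¹ := by
      intro m; rw [zpow_neg, zpow_natCast]
    have hT : (2:ℝ)^n ≠ 0 := by positivity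
    ext i j
    fin_cases i <;> fin_cases j <;>
      simp only [Matrix.cons_val_zero, Matrix.cons_val_one, Matrix.head_cons,
        Matrix.head_fin_const, Matrix.cons_val', Matrix.empty_val', Matrix.cons_val_fin_one,
        e4, e2, pow_succ, hb] <;>
      simp [Matrix.of_apply] <;>
      field_simp <;> ring

/-- image of the line of slope s under an upper-triangular map. -/
lemma image_line (a b d s : ℝ) (h : a + b * s ≠ 0) :
    (!![a,b;0,d]).mulVec '' lineOfSlope s = lineOfSlope (d * s / (a + b * s)) := by
  ext q
  constructor
  · rintro ⟨p, hp, rfl⟩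
    simp only [lineOfSlope, Set.mem_setOf_eq] at hp ⊢
    rw [mulVec_fin2]
    simp only [Matrix.cons_val_zero, Matrix.cons_val_one, Matrix.head_cons]
    rw [hp]
    field_simp
    rw [mul_div_assoc, div_self (by rw [mul_comm s b]; exact h)]
    ring
  · intro hq
    simp only [lineOfSlope, Set.mem_setOf_eq] at hq
    refine ⟨![q 0 / (a + b * s), s * (q 0 / (a + b * s))], by simp [lineOfSlope], ?_⟩
    rw [mulVec_fin2]
    funext i
    fin_cases i <;>
      simp only [Matrix.cons_val_zero, Matrix.cons_val_one, Matrix.head_cons]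
    · show _ = q 0; simp; field_simp
    · show _ = q 1; rw [hq]; simp; field_simp

lemma image_vert_of_ne (a b d : ℝ) (hb : b ≠ 0) :
    (!![a,b;0,d]).mulVec '' {p : Fin 2 → ℝ | p 0 = 0} = lineOfSlope (d / b) := by
  ext q
  constructor
  · rintro ⟨p, hp, rfl⟩
    simp only [Set.mem_setOf_eq] at hp
    simp only [lineOfSlope, Set.mem_setOf_eq]
    rw [mulVec_fin2]
    simp only [Matrix.cons_val_zero, Matrix.cons_val_one, Matrix.head_cons, hp]
    field_simp
    ring
  · intro hq
    simp only [lineOfSlope, Set.mem_setOf_eq] at hq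
    refine ⟨![0, q 0 / b], by simp, ?_⟩
    rw [mulVec_fin2]
    funext i
    fin_cases i <;>
      simp only [Matrix.cons_val_zero, Matrix.cons_val_one, Matrix.head_cons]
    · show _ = q 0; simp; field_simp
    · show _ = q 1; rw [hq]; simp; field_simp

lemma image_vert_of_zero (a d : ℝ) (hd : d ≠ 0) :
    (!![a,(0:ℝ);0,d]).mulVec '' {p : Fin 2 → ℝ | p 0 = 0} = {p : Fin 2 → ℝ | p 0 = 0} := by
  ext q
  constructor
  · rintro ⟨p, hp, rfl⟩
    simp only [Set.mem_setOf_eq] at hp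
    rw [mulVec_fin2]
    simp [hp]
  · intro hq
    simp only [Set.mem_setOf_eq] at hq
    refine ⟨![0, q 1 / d], by simp, ?_⟩
    rw [mulVec_fin2]
    funext i
    fin_cases i <;> simp [hq]
    field_simp

lemma image_horiz (a b d : ℝ) (ha : a ≠ 0) :
    (!![a,b;0,d]).mulVec '' {p : Fin 2 → ℝ | p 1 = 0} = {p : Fin 2 → ℝ | p 1 = 0} := by
  ext q
  constructor
  · rintro ⟨p, hp, rfl⟩
    simp only [Set.mem_setOf_eq] at hp
    rw [mulVec_fin2]
    simp [hp]
  · intro hq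
    simp only [Set.mem_setOf_eq] at hq
    refine ⟨![q 0 / a, 0], by simp, ?_⟩
    rw [mulVec_fin2]
    funext i
    fin_cases i <;> simp [hq]
    field_simp

theorem stmt2 (n : ℕ) (ε : Fin n → ℤ) (hε : ∀ i, ε i = 0 ∨ ε i = 1) :
    (∀ s : ℝ, 0 < s →
      ((Mprod ε).mulVec ![1, s]) 0 ≠ 0 ∧
      ((Mprod ε).mulVec ![1, s]) 1 / ((Mprod ε).mulVec ![1, s]) 0
        = (2:ℝ)^n / (1/s + 2 * (binVal ε : ℝ)) ∧
      (Mprod ε).mulVec '' lineOfSlope s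
        = lineOfSlope ((2:ℝ)^n / (1/s + 2 * (binVal ε : ℝ)))) ∧
    ((Mprod ε).mulVec ![0, 1] = ![(4:ℝ)^(-(n:ℤ)) * 2 * (binVal ε : ℝ), (2:ℝ)^(-(n:ℤ))] ∧
      (binVal ε ≠ 0 →
        (Mprod ε).mulVec '' {p : Fin 2 → ℝ | p 0 = 0}
          = lineOfSlope ((2:ℝ)^((n:ℤ)-1) / (binVal ε : ℝ))) ∧
      (binVal ε = 0 →
        (Mprod ε).mulVec '' {p : Fin 2 → ℝ | p 0 = 0} = {p : Fin 2 → ℝ | p 0 = 0})) ∧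
    ((Mprod ε).mulVec ![1, 0] = ![(4:ℝ)^(-(n:ℤ)), 0] ∧
      (Mprod ε).mulVec '' {p : Fin 2 → ℝ | p 1 = 0} = {p : Fin 2 → ℝ | p 1 = 0}) := by
  have hM := Mprod_eq n ε
  set a : ℝ := (4:ℝ)^(-(n:ℤ)) with ha_def
  set d : ℝ := (2:ℝ)^(-(n:ℤ)) with hd_def
  set B : ℝ := (binVal ε : ℝ) with hB_def
  have hBnn : 0 ≤ B := by
    rw [hB_def]
    have : (0:ℤ) ≤ binVal ε := by
      apply Finset.sum_nonneg
      intro i _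
      rcases hε i with h | h <;> simp [h]
    exact_mod_cast this
  have hapos : 0 < a := by rw [ha_def]; positivity
  have hdpos : 0 < d := by rw [hd_def]; positivity
  have hT : (0:ℝ) < (2:ℝ)^n := by positivity
  have e4 : a = (((2:ℝ)^n)^2)⁻¹ := by
    rw [ha_def, zpow_neg, zpow_natCast, ← pow_mul, show (4:ℝ) = 2^2 by norm_num, ← pow_mul,
      Nat.mul_comm]
  have e2 : d = ((2:ℝ)^n)⁻¹ := by rw [hd_def, zpow_neg, zpow_natCast]
  refine ⟨?_, ⟨?_, ?_, ?_⟩, ?_, ?_⟩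
  · intro s hs
    have hden : 0 < a + 2 * a * B * s :=
      add_pos_of_pos_of_nonneg hapos (by positivity)
    have hinv : 0 < 1/s + 2 * B := by positivity
    have hslope : d * s / (a + 2 * a * B * s) = (2:ℝ)^n / (1/s + 2 * B) := by
      rw [e4, e2]
      field_simp
    rw [hM, mulVec_fin2]
    simp only [Matrix.cons_val_zero, Matrix.cons_val_one, Matrix.head_cons]
    refine ⟨?_, ?_, ?_⟩
    · intro h
      rw [mul_one] at h
      exact absurd h hden.ne'
    · rw [zero_mul, zero_add, mul_one]
      exact hslope
    · rw [image_line a (2*a*B) d s hden.ne', hslope]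
  · rw [hM, mulVec_fin2]
    funext i
    fin_cases i <;>
      simp only [Matrix.cons_val_zero, Matrix.cons_val_one, Matrix.head_cons] <;> ring
  · intro hB0
    have hBne : B ≠ 0 := by
      rw [hB_def]
      exact_mod_cast hB0
    have hb : 2 * a * B ≠ 0 := by positivity
    have hsl2 : d / (2 * a * B) = (2:ℝ)^((n:ℤ)-1) / B := by
      rw [e4, e2, show (2:ℝ)^((n:ℤ)-1) = (2:ℝ)^n / 2 by
        rw [zpow_sub₀ (by norm_num : (2:ℝ) ≠ 0), zpow_natCast, zpow_one]]
      rw [div_eq_div_iff (by positivity) hBne]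
      field_simp
    rw [hM, image_vert_of_ne a (2*a*B) d hb, hsl2]
  · intro hB0
    have hB0' : B = 0 := by rw [hB_def, hB0]; simp
    have hmat : !![a, 2 * a * B; 0, d] = !![a, (0:ℝ); 0, d] := by rw [hB0', mul_zero]
    rw [hM, hmat, image_vert_of_zero a d hdpos.ne']
  · rw [hM, mulVec_fin2]
    funext i
    fin_cases i <;>
      simp only [Matrix.cons_val_zero, Matrix.cons_val_one, Matrix.head_cons] <;> ring
  · rw [hM, image_horiz a (2*a*B) d hapos.ne']
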